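/- If κ₁ < γ ≤ 3κ₁, then the direction ⃗ψ_ω = (0, κ₁^{-1/2}φ_ω) satisfies (⃗ψ_ω,⃗φ_ω)_H = (⃗ψ_ω, i⃗φ_ω)_H = 0 and ⟨S_ω''(⃗φ_ω)⃗ψ_ω, ⃗ψ_ω⟩ = κ₁^{-1}⟨L_{γ/κ₁}φ_ω, φ_ω⟩ < 0. -/

import Mathlib

open MeasureTheory Real Asymptotics

/-- The soliton profile `φ_ω(x) = √(2ω) sech(√ω x)`, with `sech y = 1 / cosh y`. -/
noncomputable def phiW (ω x : ℝ) : ℝ :=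
  Real.sqrt (2 * ω) * (1 / Real.cosh (Real.sqrt ω * x))

/-- The linearized operator `L_a u = -u'' + ω u - a φ_ω² u`. -/
noncomputable def Lop (ω a : ℝ) (u : ℝ → ℝ) (x : ℝ) : ℝ :=
  -(deriv (deriv u) x) + ω * u x - a * (phiW ω x) ^ 2 * u x

/-- The quadratic form `⟨L_a u, u⟩ = ∫ (|u'|² + ω u² - a φ_ω² u²)`. -/
noncomputable def QLa (ω a : ℝ) (u : ℝ → ℝ) : ℝ :=
  ∫ x : ℝ, ((deriv u x) ^ 2 + ω * (u x) ^ 2 - a * (phiW ω x) ^ 2 * (u x) ^ 2)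

/-- Pairs of complex-valued functions on ℝ. -/
abbrev Pair := (ℝ → ℂ) × (ℝ → ℂ)

/-- The energy functional `E`. -/
noncomputable def En (κ₁ κ₂ γ : ℝ) (u : Pair) : ℝ :=
  ((1 / 2) * ∫ x : ℝ, ‖deriv u.1 x‖ ^ 2) - ((κ₁ / 4) * ∫ x : ℝ, ‖u.1 x‖ ^ 4)
  + ((1 / 2) * ∫ x : ℝ, ‖deriv u.2 x‖ ^ 2) - ((κ₂ / 4) * ∫ x : ℝ, ‖u.2 x‖ ^ 4)
  - (γ / 2) * (∫ x : ℝ, (u.1 x) ^ 2 * (starRingEnd ℂ (u.2 x)) ^ 2).re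

/-- The charge functional `Q`. -/
noncomputable def Qm (u : Pair) : ℝ :=
  (1 / 2) * ((∫ x : ℝ, ‖u.1 x‖ ^ 2) + ∫ x : ℝ, ‖u.2 x‖ ^ 2)

/-- The action `S_ω = E + ω Q`. -/
noncomputable def Sfun (κ₁ κ₂ γ ω : ℝ) (u : Pair) : ℝ :=
  En κ₁ κ₂ γ u + ω * Qm u

/-- The semitrivial profile `⃗φ_ω = (κ₁^{-1/2} φ_ω, 0)`. -/
noncomputable def phivec (κ₁ ω : ℝ) : Pair :=
  (fun x => ((phiW ω x / Real.sqrt κ₁ : ℝ) : ℂ), fun _ => 0)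

/-- The profile `⃗ψ_ω = (0, κ₁^{-1/2} φ_ω)`. -/
noncomputable def psivec (κ₁ ω : ℝ) : Pair :=
  (fun _ => 0, fun x => ((phiW ω x / Real.sqrt κ₁ : ℝ) : ℂ))

/-- Real `L²`-inner product on pairs: `(⃗u,⃗v)_H = Σ_j Re ∫ u_j \bar v_j`. -/
noncomputable def Hinner (u v : Pair) : ℝ :=
  (∫ x : ℝ, (u.1 x) * (starRingEnd ℂ (v.1 x))).re
  + (∫ x : ℝ, (u.2 x) * (starRingEnd ℂ (v.2 x))).re

/-- Multiplication of a pair by `i`. -/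
noncomputable def Ivec (u : Pair) : Pair :=
  (fun x => Complex.I * u.1 x, fun x => Complex.I * u.2 x)

/-- Squared `X = H¹(ℝ,ℂ)²` norm. -/
noncomputable def XnormSq (u : Pair) : ℝ :=
  (∫ x : ℝ, ‖u.1 x‖ ^ 2) + (∫ x : ℝ, ‖deriv u.1 x‖ ^ 2)
  + (∫ x : ℝ, ‖u.2 x‖ ^ 2) + (∫ x : ℝ, ‖deriv u.2 x‖ ^ 2)

/-- Squared `H¹(ℝ,ℝ)` norm. -/
noncomputable def H1normSq (v : ℝ → ℝ) : ℝ :=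
  (∫ x : ℝ, (v x) ^ 2) + (∫ x : ℝ, (deriv v x) ^ 2)

/-- Membership in `H¹(ℝ,ℝ)`. -/
noncomputable def InH1r (v : ℝ → ℝ) : Prop :=
  Differentiable ℝ v ∧ MemLp v 2 (volume : Measure ℝ) ∧
    MemLp (deriv v) 2 (volume : Measure ℝ)

/-- Membership in `H¹(ℝ,ℂ)`. -/
noncomputable def InH1c (v : ℝ → ℂ) : Prop :=
  Differentiable ℝ v ∧ MemLp v 2 (volume : Measure ℝ) ∧
    MemLp (deriv v) 2 (volume : Measure ℝ)

/-- Membership of a pair in `X = H¹(ℝ,ℂ)²` with even symmetry. -/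
noncomputable def InXeven (u : Pair) : Prop :=
  InH1c u.1 ∧ InH1c u.2 ∧ (∀ x, u.1 (-x) = u.1 x) ∧ (∀ x, u.2 (-x) = u.2 x)


section Aux
open Filter


noncomputable def sch2 (y : ℝ) : ℝ := (Real.cosh y ^ 2)⁻¹
noncomputable def sch4 (y : ℝ) : ℝ := ((Real.cosh y ^ 2)⁻¹) ^ 2
noncomputable def Th (y : ℝ) : ℝ := Real.sinh y / Real.cosh y

lemma hasDerivAt_Th (y : ℝ) : HasDerivAt Th (sch2 y) y := by
  have h := (Real.hasDerivAt_sinh y).div (Real.hasDerivAt_cosh y) (Real.cosh_pos y).ne'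
  refine h.congr_deriv ?_
  have := Real.cosh_sq_sub_sinh_sq y
  rw [sch2, ← one_div, ← this]
  ring

lemma Th_eq (y : ℝ) : Th y = (1 - Real.exp (-(2*y))) / (1 + Real.exp (-(2*y))) := by
  have h1 : Real.exp y ≠ 0 := (Real.exp_pos y).ne'
  have h2 : (0:ℝ) < 1 + Real.exp (-(2*y)) := by positivity
  rw [Th, Real.sinh_eq, Real.cosh_eq]
  rw [div_eq_div_iff (by positivity) h2.ne']
  have e1 : Real.exp (-(2*y)) = Real.exp (-y) * Real.exp (-y) := by
    rw [← Real.exp_add]; ring_nf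
  have e2 : Real.exp (-y) * Real.exp y = 1 := by rw [← Real.exp_add]; simp
  nlinarith [Real.exp_pos (-y)]

lemma Th_tendsto : Tendsto Th atTop (nhds 1) := by
  have h : Tendsto (fun y : ℝ => Real.exp (-(2*y))) atTop (nhds 0) := by
    apply Real.tendsto_exp_atBot.comp
    have h2 : Tendsto (fun y : ℝ => 2*y) atTop atTop :=
      Tendsto.const_mul_atTop (by norm_num) tendsto_id
    exact tendsto_neg_atTop_atBot.comp h2
  have hnum : Tendsto (fun y : ℝ => (1 - Real.exp (-(2*y))) / (1 + Real.exp (-(2*y))))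
      atTop (nhds ((1 - 0) / (1 + 0))) :=
    Tendsto.div (tendsto_const_nhds.sub h) (tendsto_const_nhds.add h) (by norm_num)
  rw [funext Th_eq]
  convert hnum using 2
  norm_num

lemma Th_zero : Th 0 = 0 := by simp [Th]

lemma sch2_nonneg (y : ℝ) : 0 ≤ sch2 y := inv_nonneg.mpr (sq_nonneg _)
lemma sch4_nonneg (y : ℝ) : 0 ≤ sch4 y := sq_nonneg _

lemma int_sch2_Ioi : ∫ y in Set.Ioi (0:ℝ), sch2 y = 1 := by
  have := integral_Ioi_of_hasDerivAt_of_nonneg' (g := Th) (g' := sch2) (a := 0)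
    (fun x _ => hasDerivAt_Th x) (fun x _ => sch2_nonneg x) Th_tendsto
  rw [this, Th_zero]; norm_num

lemma intOn_sch2_Ioi : IntegrableOn sch2 (Set.Ioi (0:ℝ)) :=
  integrableOn_Ioi_deriv_of_nonneg' (fun x _ => hasDerivAt_Th x) (fun x _ => sch2_nonneg x) Th_tendsto

noncomputable def G4 (y : ℝ) : ℝ := Th y - Th y ^ 3 / 3

lemma Th_sq (y : ℝ) : Th y ^ 2 = 1 - sch2 y := by
  have hc := (Real.cosh_pos y).ne'
  rw [Th, sch2, div_pow, eq_sub_iff_add_eq]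
  field_simp
  linarith [Real.cosh_sq_sub_sinh_sq y]

lemma hasDerivAt_G4 (y : ℝ) : HasDerivAt G4 (sch4 y) y := by
  have h := ((hasDerivAt_Th y).sub (((hasDerivAt_Th y).pow 3).div_const 3))
  refine h.congr_deriv ?_
  have h1 := Th_sq y
  have : Th y ^ (3 - 1) = Th y ^ 2 := by norm_num
  simp only [this, h1, sch4, sch2]
  push_cast
  ring

lemma G4_tendsto : Tendsto G4 atTop (nhds (2/3)) := by
  have h := Th_tendsto.sub ((Th_tendsto.pow 3).div_const 3)
  have : (1 : ℝ) - 1 ^ 3 / 3 = 2/3 := by norm_num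
  rw [this] at h
  exact h

lemma int_sch4_Ioi : ∫ y in Set.Ioi (0:ℝ), sch4 y = 2/3 := by
  have := integral_Ioi_of_hasDerivAt_of_nonneg' (g := G4) (g' := sch4) (a := 0)
    (fun x _ => hasDerivAt_G4 x) (fun x _ => sch4_nonneg x) G4_tendsto
  rw [this]; simp [G4, Th_zero]

lemma intOn_sch4_Ioi : IntegrableOn sch4 (Set.Ioi (0:ℝ)) :=
  integrableOn_Ioi_deriv_of_nonneg' (fun x _ => hasDerivAt_G4 x) (fun x _ => sch4_nonneg x) G4_tendsto

lemma even_integrable {f : ℝ → ℝ} (he : ∀ x, f (-x) = f x)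
    (h : IntegrableOn f (Set.Ioi (0:ℝ))) : Integrable f := by
  have hIic : IntegrableOn f (Set.Iic (0:ℝ)) := by
    rw [← Measure.map_neg_eq_self (volume : Measure ℝ)]
    have m : MeasurableEmbedding fun x : ℝ => -x :=
      (Homeomorph.neg ℝ).measurableEmbedding
    rw [m.integrableOn_map_iff]
    simp_rw [Function.comp_def, he, Set.neg_preimage, Set.neg_Iic, neg_zero]
    exact (integrableOn_Ici_iff_integrableOn_Ioi).mpr h
  have := hIic.union h
  rwa [Set.Iic_union_Ioi, integrableOn_univ] at this

lemma even_integral {f : ℝ → ℝ} (he : ∀ x, f (-x) = f x) :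
    ∫ x, f x = 2 * ∫ x in Set.Ioi (0:ℝ), f x := by
  have h : ∀ x, f |x| = f x := by
    intro x
    rcases abs_choice x with h | h
    · rw [h]
    · rw [h, he]
  rw [← integral_comp_abs (f := f)]
  congr 1
  exact (funext h).symm

lemma integrable_sch2 : Integrable sch2 :=
  even_integrable (fun x => by simp [sch2]) intOn_sch2_Ioi
lemma integrable_sch4 : Integrable sch4 :=
  even_integrable (fun x => by simp [sch4]) intOn_sch4_Ioi
lemma int_sch2 : ∫ y, sch2 y = 2 := by
  rw [even_integral (fun x => by simp [sch2]), int_sch2_Ioi]; norm_num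
lemma int_sch4 : ∫ y, sch4 y = 4/3 := by
  rw [even_integral (fun x => by simp [sch4]), int_sch4_Ioi]; norm_num

lemma integrable_sch2_comp {σ : ℝ} (hσ : σ ≠ 0) : Integrable fun x => sch2 (σ * x) :=
  integrable_sch2.comp_mul_left' hσ
lemma integrable_sch4_comp {σ : ℝ} (hσ : σ ≠ 0) : Integrable fun x => sch4 (σ * x) :=
  integrable_sch4.comp_mul_left' hσ
lemma int_sch2_comp {σ : ℝ} (hσ : 0 < σ) : ∫ x, sch2 (σ * x) = 2 / σ := by
  rw [MeasureTheory.Measure.integral_comp_mul_left sch2 σ, int_sch2, abs_of_pos (inv_pos.mpr hσ)]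
  rw [smul_eq_mul]; ring
lemma int_sch4_comp {σ : ℝ} (hσ : 0 < σ) : ∫ x, sch4 (σ * x) = 4 / (3 * σ) := by
  rw [MeasureTheory.Measure.integral_comp_mul_left sch4 σ, int_sch4, abs_of_pos (inv_pos.mpr hσ)]
  rw [smul_eq_mul]; ring

noncomputable def phiW' (ω x : ℝ) : ℝ :=
  -(Real.sqrt (2*ω) * (Real.sqrt ω * Real.sinh (Real.sqrt ω * x)) / Real.cosh (Real.sqrt ω * x) ^ 2)

lemma hasDerivAt_phiW (ω x : ℝ) : HasDerivAt (phiW ω) (phiW' ω x) x := by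
  have hc : HasDerivAt (fun x : ℝ => Real.cosh (Real.sqrt ω * x))
      (Real.sinh (Real.sqrt ω * x) * Real.sqrt ω) x := by
    have hi : HasDerivAt (fun x : ℝ => Real.sqrt ω * x) (Real.sqrt ω) x := by
      simpa using (hasDerivAt_id x).const_mul (Real.sqrt ω)
    exact (Real.hasDerivAt_cosh _).comp x hi
  have hinv := hc.inv (Real.cosh_pos _).ne'
  have h := hinv.const_mul (Real.sqrt (2*ω))
  have he : phiW ω = fun x => Real.sqrt (2*ω) * (Real.cosh (Real.sqrt ω * x))⁻¹ := by
    funext x; rw [phiW, one_div]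
  rw [he]
  refine h.congr_deriv ?_
  rw [phiW']
  ring

lemma deriv_phiW (ω : ℝ) : deriv (phiW ω) = phiW' ω :=
  funext fun x => (hasDerivAt_phiW ω x).deriv

lemma phiW_sq {ω : ℝ} (hω : 0 ≤ ω) (x : ℝ) :
    phiW ω x ^ 2 = 2 * ω * sch2 (Real.sqrt ω * x) := by
  rw [phiW, sch2, mul_pow, Real.sq_sqrt (by linarith)]
  rw [div_pow, one_pow, one_div]

lemma phiW_pow4 {ω : ℝ} (hω : 0 ≤ ω) (x : ℝ) :
    phiW ω x ^ 4 = 4 * ω^2 * sch4 (Real.sqrt ω * x) := by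
  have h : phiW ω x ^ 4 = (phiW ω x ^ 2) ^ 2 := by ring
  rw [h, phiW_sq hω, sch4, sch2]
  ring

lemma phiW'_sq {ω : ℝ} (hω : 0 ≤ ω) (x : ℝ) :
    phiW' ω x ^ 2 = 2 * ω^2 * (sch2 (Real.sqrt ω * x) - sch4 (Real.sqrt ω * x)) := by
  have hc := (Real.cosh_pos (Real.sqrt ω * x)).ne'
  have hs : Real.sinh (Real.sqrt ω * x) ^ 2 = Real.cosh (Real.sqrt ω * x) ^ 2 - 1 := by
    linarith [Real.cosh_sq_sub_sinh_sq (Real.sqrt ω * x)]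
  rw [phiW', sch2, sch4, neg_sq, div_pow, mul_pow, mul_pow,
    Real.sq_sqrt (by linarith : (0:ℝ) ≤ 2*ω), Real.sq_sqrt hω, hs]
  field_simp

section PhiInt
variable {ω : ℝ} (hω : 0 < ω)
include hω

lemma int_phiW_sq : ∫ x, phiW ω x ^ 2 = 4 * ω / Real.sqrt ω := by
  have h : (fun x => phiW ω x ^ 2) = fun x => 2 * ω * sch2 (Real.sqrt ω * x) :=
    funext (phiW_sq hω.le)
  rw [h, MeasureTheory.integral_const_mul, int_sch2_comp (Real.sqrt_pos.mpr hω)]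
  ring

lemma integrable_phiW_sq : Integrable (fun x => phiW ω x ^ 2) := by
  have h : (fun x => phiW ω x ^ 2) = fun x => 2 * ω * sch2 (Real.sqrt ω * x) :=
    funext (phiW_sq hω.le)
  rw [h]
  exact (integrable_sch2_comp (Real.sqrt_pos.mpr hω).ne').const_mul _

lemma int_phiW_pow4 : ∫ x, phiW ω x ^ 4 = 16/3 * ω^2 / Real.sqrt ω := by
  have h : (fun x => phiW ω x ^ 4) = fun x => 4 * ω^2 * sch4 (Real.sqrt ω * x) :=
    funext (phiW_pow4 hω.le)
  rw [h, MeasureTheory.integral_const_mul, int_sch4_comp (Real.sqrt_pos.mpr hω)]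
  field_simp
  ring

lemma integrable_phiW_pow4 : Integrable (fun x => phiW ω x ^ 4) := by
  have h : (fun x => phiW ω x ^ 4) = fun x => 4 * ω^2 * sch4 (Real.sqrt ω * x) :=
    funext (phiW_pow4 hω.le)
  rw [h]
  exact (integrable_sch4_comp (Real.sqrt_pos.mpr hω).ne').const_mul _

lemma deriv_phiW_sq_eq : (fun x => (deriv (phiW ω) x) ^ 2)
    = fun x => 2 * ω^2 * sch2 (Real.sqrt ω * x) - 2 * ω^2 * sch4 (Real.sqrt ω * x) := by
  funext x
  rw [deriv_phiW, phiW'_sq hω.le]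
  ring

lemma int_deriv_phiW_sq : ∫ x, (deriv (phiW ω) x) ^ 2 = 4/3 * ω^2 / Real.sqrt ω := by
  have h1 : Integrable (fun x => 2 * ω^2 * sch2 (Real.sqrt ω * x)) :=
    (integrable_sch2_comp (Real.sqrt_pos.mpr hω).ne').const_mul _
  have h2 : Integrable (fun x => 2 * ω^2 * sch4 (Real.sqrt ω * x)) :=
    (integrable_sch4_comp (Real.sqrt_pos.mpr hω).ne').const_mul _
  rw [deriv_phiW_sq_eq hω, MeasureTheory.integral_sub h1 h2,
    MeasureTheory.integral_const_mul, MeasureTheory.integral_const_mul,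
    int_sch2_comp (Real.sqrt_pos.mpr hω), int_sch4_comp (Real.sqrt_pos.mpr hω)]
  field_simp
  ring

lemma integrable_deriv_phiW_sq : Integrable (fun x => (deriv (phiW ω) x) ^ 2) := by
  rw [deriv_phiW_sq_eq hω]
  exact ((integrable_sch2_comp (Real.sqrt_pos.mpr hω).ne').const_mul _).sub
    ((integrable_sch4_comp (Real.sqrt_pos.mpr hω).ne').const_mul _)

lemma QLa_val (a : ℝ) : QLa ω a (phiW ω) = 16/3 * (1 - a) * ω^2 / Real.sqrt ω := by
  rw [QLa]
  have h : (fun x => (deriv (phiW ω) x) ^ 2 + ω * phiW ω x ^ 2 - a * phiW ω x ^ 2 * phiW ω x ^ 2)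
      = fun x => ((deriv (phiW ω) x) ^ 2 + ω * phiW ω x ^ 2) - a * phiW ω x ^ 4 := by
    funext x; ring
  have hfg : Integrable (fun x => (deriv (phiW ω) x) ^ 2 + ω * phiW ω x ^ 2) :=
    (integrable_deriv_phiW_sq hω).add ((integrable_phiW_sq hω).const_mul ω)
  have hC : Integrable (fun x => a * phiW ω x ^ 4) := (integrable_phiW_pow4 hω).const_mul a
  rw [h, MeasureTheory.integral_sub hfg hC,
    MeasureTheory.integral_add (integrable_deriv_phiW_sq hω) ((integrable_phiW_sq hω).const_mul ω),
    MeasureTheory.integral_const_mul, MeasureTheory.integral_const_mul,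
    int_deriv_phiW_sq hω, int_phiW_sq hω, int_phiW_pow4 hω]
  field_simp
  ring

end PhiInt

lemma iteratedDeriv_two_poly (A B C : ℝ) :
    iteratedDeriv 2 (fun t : ℝ => A + B * t^2 + C * t^4) 0 = 2 * B := by
  have hd : ∀ t : ℝ, HasDerivAt (fun t : ℝ => A + B * t^2 + C * t^4) (B*(2*t) + C*(4*t^3)) t := by
    intro t
    have h := ((hasDerivAt_const t A).add ((hasDerivAt_pow 2 t).const_mul B)).add
      ((hasDerivAt_pow 4 t).const_mul C)
    norm_num at h
    exact h
  have hD : deriv (fun t : ℝ => A + B * t^2 + C * t^4) = fun t => B*(2*t) + C*(4*t^3) :=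
    funext fun t => (hd t).deriv
  rw [iteratedDeriv_succ, iteratedDeriv_one, hD]
  have h2 : HasDerivAt (fun t : ℝ => B*(2*t) + C*(4*t^3)) (2*B) 0 := by
    have ha := (((hasDerivAt_id (0:ℝ)).const_mul 2).const_mul B).add
      (((hasDerivAt_pow 3 (0:ℝ)).const_mul 4).const_mul C)
    norm_num at ha
    refine ha.congr_deriv ?_
    ring
  rw [h2.deriv]

end Aux

/-- for `κ₁ < γ ≤ 3κ₁`, the direction `⃗ψ_ω = (0,κ₁^{-1/2}φ_ω)`
satisfies `(⃗ψ_ω,⃗φ_ω)_H = (⃗ψ_ω,i⃗φ_ω)_H = 0` and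
`⟨S_ω''(⃗φ_ω)⃗ψ_ω,⃗ψ_ω⟩ = κ₁^{-1}⟨L_{γ/κ₁}φ_ω,φ_ω⟩ < 0`. -/
theorem negative_direction (κ₁ κ₂ γ ω : ℝ)
    (hκ₁ : 0 < κ₁) (hκ₂ : 0 < κ₂) (hγ : κ₁ < γ) (hγ3 : γ ≤ 3 * κ₁) (hω : 0 < ω) :
    Hinner (psivec κ₁ ω) (phivec κ₁ ω) = 0 ∧
    Hinner (psivec κ₁ ω) (Ivec (phivec κ₁ ω)) = 0 ∧
    iteratedDeriv 2 (fun t : ℝ => Sfun κ₁ κ₂ γ ω (phivec κ₁ ω + t • psivec κ₁ ω)) 0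
      = (1 / κ₁) * QLa ω (γ / κ₁) (phiW ω) ∧
    iteratedDeriv 2 (fun t : ℝ => Sfun κ₁ κ₂ γ ω (phivec κ₁ ω + t • psivec κ₁ ω)) 0
      < 0 := by
  
  have hσ : (0:ℝ) < Real.sqrt κ₁ := Real.sqrt_pos.mpr hκ₁
  have hκ : Real.sqrt κ₁ ^ 2 = κ₁ := Real.sq_sqrt hκ₁.le
  have hκ0 : κ₁ ≠ 0 := hκ₁.ne'
  have hsω : (0:ℝ) < Real.sqrt ω := Real.sqrt_pos.mpr hω
  -- the pair in explicit form
  have hpair : ∀ t : ℝ, phivec κ₁ ω + t • psivec κ₁ ω =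
      (fun x => ((phiW ω x / Real.sqrt κ₁ : ℝ) : ℂ),
       fun x => ((t * (phiW ω x / Real.sqrt κ₁) : ℝ) : ℂ)) := by
    intro t
    refine Prod.ext ?_ ?_ <;> funext x <;>
      simp [phivec, psivec, Complex.real_smul] <;> push_cast <;> ring
  -- derivatives of the (complexified) components
  have hG : ∀ x, HasDerivAt (fun x => phiW ω x / Real.sqrt κ₁)
      (phiW' ω x / Real.sqrt κ₁) x := fun x => (hasDerivAt_phiW ω x).div_const _
  have hd1 : ∀ x : ℝ, deriv (fun x => ((phiW ω x / Real.sqrt κ₁ : ℝ) : ℂ)) x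
      = ((phiW' ω x / Real.sqrt κ₁ : ℝ) : ℂ) := fun x => ((hG x).ofReal_comp).deriv
  have hd2 : ∀ (t : ℝ) (x : ℝ), deriv (fun x => ((t * (phiW ω x / Real.sqrt κ₁) : ℝ) : ℂ)) x
      = ((t * (phiW' ω x / Real.sqrt κ₁) : ℝ) : ℂ) := by
    intro t x
    exact (((hG x).const_mul t).ofReal_comp).deriv
  -- the six integral evaluations
  have e1 : (∫ x : ℝ, ‖deriv (fun x => ((phiW ω x / Real.sqrt κ₁ : ℝ) : ℂ)) x‖ ^ 2)
      = (1/κ₁) * ∫ x : ℝ, (deriv (phiW ω) x) ^ 2 := by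
    have h : ∀ x : ℝ, ‖deriv (fun x => ((phiW ω x / Real.sqrt κ₁ : ℝ) : ℂ)) x‖ ^ 2
        = (1/κ₁) * (deriv (phiW ω) x) ^ 2 := by
      intro x
      rw [hd1 x, Complex.norm_real, Real.norm_eq_abs, sq_abs, deriv_phiW, div_pow, hκ]
      ring
    simp only [h]
    exact MeasureTheory.integral_const_mul _ _
  have e2 : (∫ x : ℝ, ‖(((phiW ω x / Real.sqrt κ₁ : ℝ) : ℂ))‖ ^ 2)
      = (1/κ₁) * ∫ x : ℝ, (phiW ω x) ^ 2 := by
    have h : ∀ x : ℝ, ‖(((phiW ω x / Real.sqrt κ₁ : ℝ) : ℂ))‖ ^ 2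
        = (1/κ₁) * (phiW ω x) ^ 2 := by
      intro x
      rw [Complex.norm_real, Real.norm_eq_abs, sq_abs, div_pow, hκ]
      ring
    simp only [h]
    exact MeasureTheory.integral_const_mul _ _
  have e3 : (∫ x : ℝ, ‖(((phiW ω x / Real.sqrt κ₁ : ℝ) : ℂ))‖ ^ 4)
      = (1/κ₁^2) * ∫ x : ℝ, (phiW ω x) ^ 4 := by
    have h : ∀ x : ℝ, ‖(((phiW ω x / Real.sqrt κ₁ : ℝ) : ℂ))‖ ^ 4
        = (1/κ₁^2) * (phiW ω x) ^ 4 := by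
      intro x
      have h4 : Real.sqrt κ₁ ^ 4 = κ₁ ^ 2 := by
        rw [show (4:ℕ) = 2*2 by norm_num, pow_mul, hκ]
      rw [Complex.norm_real, Real.norm_eq_abs, ← abs_pow, abs_of_nonneg (by positivity),
        div_pow, h4]
      ring
    simp only [h]
    exact MeasureTheory.integral_const_mul _ _
  have e4 : ∀ t : ℝ, (∫ x : ℝ, ‖deriv (fun x => ((t * (phiW ω x / Real.sqrt κ₁) : ℝ) : ℂ)) x‖ ^ 2)
      = (t^2/κ₁) * ∫ x : ℝ, (deriv (phiW ω) x) ^ 2 := by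
    intro t
    have h : ∀ x : ℝ, ‖deriv (fun x => ((t * (phiW ω x / Real.sqrt κ₁) : ℝ) : ℂ)) x‖ ^ 2
        = (t^2/κ₁) * (deriv (phiW ω) x) ^ 2 := by
      intro x
      rw [hd2 t x, Complex.norm_real, Real.norm_eq_abs, sq_abs, deriv_phiW, mul_pow, div_pow, hκ]
      ring
    simp only [h]
    exact MeasureTheory.integral_const_mul _ _
  have e5 : ∀ t : ℝ, (∫ x : ℝ, ‖(((t * (phiW ω x / Real.sqrt κ₁) : ℝ) : ℂ))‖ ^ 2)
      = (t^2/κ₁) * ∫ x : ℝ, (phiW ω x) ^ 2 := by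
    intro t
    have h : ∀ x : ℝ, ‖(((t * (phiW ω x / Real.sqrt κ₁) : ℝ) : ℂ))‖ ^ 2
        = (t^2/κ₁) * (phiW ω x) ^ 2 := by
      intro x
      rw [Complex.norm_real, Real.norm_eq_abs, sq_abs, mul_pow, div_pow, hκ]
      ring
    simp only [h]
    exact MeasureTheory.integral_const_mul _ _
  have e6 : ∀ t : ℝ, (∫ x : ℝ, ‖(((t * (phiW ω x / Real.sqrt κ₁) : ℝ) : ℂ))‖ ^ 4)
      = (t^4/κ₁^2) * ∫ x : ℝ, (phiW ω x) ^ 4 := by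
    intro t
    have h : ∀ x : ℝ, ‖(((t * (phiW ω x / Real.sqrt κ₁) : ℝ) : ℂ))‖ ^ 4
        = (t^4/κ₁^2) * (phiW ω x) ^ 4 := by
      intro x
      have h4 : Real.sqrt κ₁ ^ 4 = κ₁ ^ 2 := by
        rw [show (4:ℕ) = 2*2 by norm_num, pow_mul, hκ]
      rw [Complex.norm_real, Real.norm_eq_abs, ← abs_pow, abs_of_nonneg ?_, mul_pow, div_pow, h4]
      · ring
      · positivity
    simp only [h]
    exact MeasureTheory.integral_const_mul _ _
  have e7 : ∀ t : ℝ, (∫ x : ℝ, (((phiW ω x / Real.sqrt κ₁ : ℝ) : ℂ)) ^ 2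
        * (starRingEnd ℂ (((t * (phiW ω x / Real.sqrt κ₁) : ℝ) : ℂ))) ^ 2).re
      = (t^2/κ₁^2) * ∫ x : ℝ, (phiW ω x) ^ 4 := by
    intro t
    have h4 : Real.sqrt κ₁ ^ 4 = κ₁ ^ 2 := by
      rw [show (4:ℕ) = 2*2 by norm_num, pow_mul, hκ]
    have h : ∀ x : ℝ, (((phiW ω x / Real.sqrt κ₁ : ℝ) : ℂ)) ^ 2
        * (starRingEnd ℂ (((t * (phiW ω x / Real.sqrt κ₁) : ℝ) : ℂ))) ^ 2
        = (((t^2/κ₁^2) * (phiW ω x) ^ 4 : ℝ) : ℂ) := by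
      intro x
      rw [Complex.conj_ofReal]
      rw [show (((phiW ω x / Real.sqrt κ₁ : ℝ) : ℂ)) ^ 2
          * (((t * (phiW ω x / Real.sqrt κ₁) : ℝ) : ℂ)) ^ 2
          = ((((phiW ω x / Real.sqrt κ₁) ^ 2 * (t * (phiW ω x / Real.sqrt κ₁)) ^ 2 : ℝ)) : ℂ) by
        push_cast; ring]
      congr 1
      rw [div_pow, mul_pow, div_pow]
      field_simp
      rw [h4]; ring
    simp only [h]
    have hre : (∫ x : ℝ, (((t^2/κ₁^2) * (phiW ω x) ^ 4 : ℝ) : ℂ))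
        = (((∫ x : ℝ, (t^2/κ₁^2) * (phiW ω x) ^ 4 : ℝ)) : ℂ) := integral_ofReal
    rw [hre, Complex.ofReal_re]
    exact MeasureTheory.integral_const_mul _ _
  -- the function of t is an explicit polynomial
  have hfun : (fun t : ℝ => Sfun κ₁ κ₂ γ ω (phivec κ₁ ω + t • psivec κ₁ ω))
      = fun t : ℝ =>
        ((1/2) * ((1/κ₁) * ∫ x : ℝ, (deriv (phiW ω) x) ^ 2)
          - (κ₁/4) * ((1/κ₁^2) * ∫ x : ℝ, (phiW ω x) ^ 4)
          + (ω/2) * ((1/κ₁) * ∫ x : ℝ, (phiW ω x) ^ 2))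
        + ((1/2) * ((1/κ₁) * ∫ x : ℝ, (deriv (phiW ω) x) ^ 2)
          + (ω/2) * ((1/κ₁) * ∫ x : ℝ, (phiW ω x) ^ 2)
          - (γ/2) * ((1/κ₁^2) * ∫ x : ℝ, (phiW ω x) ^ 4)) * t^2
        + (-(κ₂/4) * ((1/κ₁^2) * ∫ x : ℝ, (phiW ω x) ^ 4)) * t^4 := by
    funext t
    rw [hpair t]
    simp only [Sfun, En, Qm]
    rw [e1, e2, e3, e4 t, e5 t, e6 t, e7 t]
    ring
  have hkey : iteratedDeriv 2
      (fun t : ℝ => Sfun κ₁ κ₂ γ ω (phivec κ₁ ω + t • psivec κ₁ ω)) 0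
      = (1 / κ₁) * QLa ω (γ / κ₁) (phiW ω) := by
    rw [hfun, iteratedDeriv_two_poly, QLa_val hω (γ/κ₁),
      int_deriv_phiW_sq hω, int_phiW_sq hω, int_phiW_pow4 hω]
    field_simp
    ring
  have hneg : (1 / κ₁) * QLa ω (γ / κ₁) (phiW ω) < 0 := by
    rw [QLa_val hω (γ/κ₁)]
    have h1 : 1 - γ/κ₁ < 0 := by
      rw [sub_neg]
      exact (one_lt_div hκ₁).mpr hγ
    apply mul_neg_of_pos_of_neg (by positivity)
    apply div_neg_of_neg_of_pos _ hsω
    nlinarith [pow_pos hω 2]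
  refine ⟨?_, ?_, hkey, hkey ▸ hneg⟩
  · simp [Hinner, psivec, phivec]
  · simp [Hinner, psivec, phivec, Ivec]
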